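/- Fix m ≥ 2 and let p_n denote the n-th prime. The set of finite products { ∏_{n ∈ P} J(2^m p_n) : P ⊂ ℕ \ {0} finite }, where J(2^m p) = (2(m+1) + p(2^{m+1} − 1)) / (2(m+1) + (2^{m+1} − 1)(1 + p)), is dense in the interval (0, 1]. -/

import Mathlib

open Filter

/-- The explicit value `J(2^m p) = (2(m+1) + p(2^{m+1} − 1)) / (2(m+1) + (2^{m+1} − 1)(1 + p))`. -/
noncomputable def Jx (m p : ℕ) : ℝ :=
  (2 * ((m : ℝ) + 1) + (p : ℝ) * (2 ^ (m + 1) - 1)) /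
    (2 * ((m : ℝ) + 1) + (2 ^ (m + 1) - 1) * (1 + (p : ℝ)))

lemma two_pow_lower (m : ℕ) (hm : 2 ≤ m) : 2*m+3 ≤ 2^(m+1) := by
  induction m with
  | zero => omega
  | succ k ih =>
    rcases Nat.lt_or_ge k 2 with h | h
    · interval_cases k
      · omega
      · norm_num
    · have h1 := ih h
      have h2 : 2^(k+1+1) = 2 * 2^(k+1) := by ring
      omega

lemma two_le_two_pow (m : ℕ) : (2:ℝ) ≤ 2^(m+1) := by
  calc (2:ℝ) = 2^1 := by norm_num
  _ ≤ 2^(m+1) := by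
    apply pow_le_pow_right₀ (by norm_num) (by omega)

lemma Jx_denom_pos (m p : ℕ) :
    0 < 2 * ((m : ℝ) + 1) + (2 ^ (m + 1) - 1) * (1 + (p : ℝ)) := by
  have h := two_le_two_pow m
  have hp : (0:ℝ) ≤ p := Nat.cast_nonneg p
  have hm : (0:ℝ) ≤ m := Nat.cast_nonneg m
  nlinarith

lemma Jx_pos (m p : ℕ) : 0 < Jx m p := by
  apply div_pos _ (Jx_denom_pos m p)
  have h := two_le_two_pow m
  have hp : (0:ℝ) ≤ p := Nat.cast_nonneg p
  have hm : (0:ℝ) ≤ m := Nat.cast_nonneg m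
  nlinarith

lemma Jx_lt_one (m p : ℕ) : Jx m p < 1 := by
  rw [Jx, div_lt_one (Jx_denom_pos m p)]
  have h := two_le_two_pow m
  have hp : (0:ℝ) ≤ p := Nat.cast_nonneg p
  nlinarith

lemma Jx_le (m p : ℕ) (hm : 2 ≤ m) : Jx m p ≤ 1 - 1/(2 + (p:ℝ)) := by
  have hp : (0:ℝ) ≤ p := Nat.cast_nonneg p
  have h2p : (0:ℝ) < 2 + p := by linarith
  have hAB : (2:ℝ)*m + 3 ≤ 2^(m+1) := by exact_mod_cast two_pow_lower m hm
  have : (1:ℝ) - 1/(2+p) = (1+p)/(2+p) := by field_simp; ring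
  rw [this, Jx, div_le_div_iff₀ (Jx_denom_pos m p) h2p]
  nlinarith

lemma Jx_ge (m p : ℕ) (hp2 : 2 ≤ p) : 1 - 1/(p:ℝ) ≤ Jx m p := by
  have hp : (2:ℝ) ≤ p := by exact_mod_cast hp2
  have hp0 : (0:ℝ) < p := by linarith
  have h := two_le_two_pow m
  have hm : (0:ℝ) ≤ m := Nat.cast_nonneg m
  have : (1:ℝ) - 1/p = (p-1)/p := by field_simp
  rw [this, Jx, div_le_div_iff₀ hp0 (Jx_denom_pos m p)]
  nlinarith

lemma not_summable_aux :
    ¬ Summable (fun j : ℕ => 1/(2 + (Nat.nth Nat.Prime j : ℝ))) := by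
  intro h
  have h1 : Summable (fun j : ℕ => 1/(Nat.nth Nat.Prime j : ℝ)) := by
    have h2 : Summable (fun j : ℕ => 2 * (1/(2 + (Nat.nth Nat.Prime j : ℝ)))) := h.mul_left 2
    apply h2.of_nonneg_of_le (fun j => by positivity)
    intro j
    have hp : (2:ℝ) ≤ (Nat.nth Nat.Prime j : ℝ) := by
      exact_mod_cast (Nat.prime_nth_prime j).two_le
    rw [mul_one_div, div_le_div_iff₀ (by linarith) (by linarith)]
    linarith
  classical
  have hinj : Function.Injective (fun q : Nat.Primes => Nat.count Nat.Prime q.1) := by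
    intro q r hqr
    have hq := Nat.nth_count q.2
    have hr := Nat.nth_count r.2
    apply Subtype.ext
    rw [← hq, ← hr]
    simp only at hqr
    rw [hqr]
  have h3 : Summable ((fun j : ℕ => 1/(Nat.nth Nat.Prime j : ℝ)) ∘
      (fun q : Nat.Primes => Nat.count Nat.Prime q.1)) := h1.comp_injective hinj
  have h4 : Summable (fun q : Nat.Primes => 1/((q:ℕ) : ℝ)) := by
    have heq : ∀ q : Nat.Primes,
        ((fun j : ℕ => 1/(Nat.nth Nat.Prime j : ℝ)) ∘
          (fun q : Nat.Primes => Nat.count Nat.Prime q.1)) q = 1/((q:ℕ):ℝ) := by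
      intro q
      simp [Function.comp, Nat.nth_count q.2]
    exact (summable_congr heq).mp h3
  exact Nat.Primes.not_summable_one_div h4

theorem prod_Jx_dense (m : ℕ) (hm : 2 ≤ m) :
    ∀ x ∈ Set.Ioc (0 : ℝ) 1,
      x ∈ closure {y : ℝ | ∃ P : Finset ℕ, (∀ n ∈ P, n ≠ 0) ∧
        y = ∏ n ∈ P, Jx m (Nat.nth Nat.Prime (n - 1))} := by
  classical
  intro x hx
  obtain ⟨hx0, hx1⟩ := hx
  rw [Metric.mem_closure_iff]
  intro ε hε
  set δ : ℝ := ε/2 with hδdef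
  have hδ : 0 < δ := by positivity
  set J : ℕ → ℝ := fun j => Jx m (Nat.nth Nat.Prime j) with hJdef
  have hJpos : ∀ j, 0 < J j := fun j => Jx_pos _ _
  have hp2 : ∀ j, 2 ≤ Nat.nth Nat.Prime j := fun j => (Nat.prime_nth_prime j).two_le
  -- choose K
  set K : ℕ := ⌈(x+δ)/δ⌉₊ with hKdef
  have hKprime : ∀ j, K ≤ j → (x+δ)/δ ≤ (Nat.nth Nat.Prime j : ℝ) := by
    intro j hj
    have h1 : (x+δ)/δ ≤ K := Nat.le_ceil _
    have h2 : (K : ℝ) ≤ j := by exact_mod_cast hj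
    have h3 : (j : ℝ) ≤ Nat.nth Nat.Prime j := by
      have := Nat.add_two_le_nth_prime j
      exact_mod_cast (by omega : j ≤ Nat.nth Nat.Prime j)
    linarith
  have hJclose : ∀ j, K ≤ j → x / J j ≤ x + δ := by
    intro j hj
    have hq : (x+δ)/δ ≤ (Nat.nth Nat.Prime j : ℝ) := hKprime j hj
    have hqpos : (0:ℝ) < Nat.nth Nat.Prime j := by
      have := hp2 j; positivity
    have h1 : 1/(Nat.nth Nat.Prime j : ℝ) ≤ δ/(x+δ) := by
      rw [div_le_div_iff₀ hqpos (by linarith)]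
      rw [div_le_iff₀ hδ] at hq
      linarith
    have h2 : x/(x+δ) ≤ J j := by
      have := Jx_ge m (Nat.nth Nat.Prime j) (hp2 j)
      have h3 : x/(x+δ) = 1 - δ/(x+δ) := by field_simp; ring
      rw [h3]
      linarith
    have hJj : 0 < J j := hJpos j
    rw [div_le_iff₀ hJj]
    calc x = (x+δ) * (x/(x+δ)) := by field_simp
    _ ≤ (x+δ) * J j := by
      apply mul_le_mul_of_nonneg_left h2 (by linarith)
  -- greedy sequence of finsets
  set S : ℕ → Finset ℕ := fun k => Nat.rec (∅ : Finset ℕ)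
    (fun k Sk => if x ≤ (∏ j ∈ Sk, J j) * J (K+k) then insert (K+k) Sk else Sk) k with hSdef
  have hS0 : S 0 = ∅ := rfl
  have hSsucc : ∀ k, S (k+1) =
      if x ≤ (∏ j ∈ S k, J j) * J (K+k) then insert (K+k) (S k) else S k := fun k => rfl
  have hsub : ∀ k, S k ⊆ Finset.Ico K (K+k) := by
    intro k
    induction k with
    | zero => simp [hS0]
    | succ k ih =>
      rw [hSsucc]
      split
      · intro a ha
        rcases Finset.mem_insert.mp ha with h | h
        · subst h; simp [Finset.mem_Ico]
        · have := ih h; rw [Finset.mem_Ico] at this ⊢; omega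
      · intro a ha
        have := ih ha; rw [Finset.mem_Ico] at this ⊢; omega
  have hge : ∀ k, x ≤ ∏ j ∈ S k, J j := by
    intro k
    induction k with
    | zero => simpa [hS0] using hx1
    | succ k ih =>
      rw [hSsucc]
      split_ifs with h
      · rw [Finset.prod_insert (by
          intro hmem
          have := hsub k hmem
          rw [Finset.mem_Ico] at this; omega)]
        rw [mul_comm]
        exact h
      · exact ih
  -- case split
  by_cases hA : ∃ k, ¬ x ≤ (∏ j ∈ S k, J j) * J (K+k)
  · obtain ⟨k, hk⟩ := hA
    push_neg at hk
    have hlt : ∏ j ∈ S k, J j < x / J (K+k) := by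
      rw [lt_div_iff₀ (hJpos (K+k))]
      exact hk
    have hub : ∏ j ∈ S k, J j ≤ x + δ := le_of_lt (lt_of_lt_of_le hlt (hJclose (K+k) (by omega)))
    refine ⟨∏ j ∈ S k, J j, ?_, ?_⟩
    · refine ⟨(S k).image (· + 1), ?_, ?_⟩
      · intro n hn
        rcases Finset.mem_image.mp hn with ⟨j, _, rfl⟩
        omega
      · rw [Finset.prod_image (by intro a _ b _ h; simp only at h; omega)]
        apply Finset.prod_congr rfl
        intro j _
        simp [hJdef]
    · have hy := hge k
      rw [Real.dist_eq, abs_of_nonpos (by linarith)]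
      have : δ < ε := by rw [hδdef]; linarith
      linarith
  · push_neg at hA
    exfalso
    -- S k = Ico K (K+k)
    have hSeq : ∀ k, S k = Finset.Ico K (K+k) := by
      intro k
      induction k with
      | zero => simp [hS0]
      | succ k ih =>
        rw [hSsucc, if_pos (hA k), ih]
        have hkk : K+(k+1) = (K+k)+1 := by omega
        rw [hkk, Nat.Ico_succ_right_eq_insert_Ico (by omega)]
    -- divergence of sums
    set f : ℕ → ℝ := fun j => 1/(2 + (Nat.nth Nat.Prime j : ℝ)) with hfdef
    have hfnn : ∀ j, 0 ≤ f j := by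
      intro j
      have := hp2 j
      positivity
    have hdiv : Tendsto (fun n => ∑ j ∈ Finset.range n, f j) atTop atTop := by
      rw [← not_summable_iff_tendsto_nat_atTop_of_nonneg hfnn]
      exact not_summable_aux
    have hdiv2 : Tendsto (fun k => ∑ j ∈ Finset.Ico K (K+k), f j) atTop atTop := by
      have h1 : Tendsto (fun k : ℕ => K + k) atTop atTop :=
        tendsto_atTop_atTop_of_monotone (fun a b h => by omega) (fun b => ⟨b, by omega⟩)
      have h3 : Tendsto (fun k => (∑ j ∈ Finset.range (K+k), f j) - ∑ j ∈ Finset.range K, f j)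
          atTop atTop := tendsto_atTop_add_const_right atTop _ (hdiv.comp h1)
      apply h3.congr
      intro k
      rw [Finset.sum_Ico_eq_sub _ (by omega)]
    -- pick k with sum large
    obtain ⟨k, hk⟩ := (hdiv2.eventually_ge_atTop (-Real.log x + 1)).exists
    have hprodle : ∏ j ∈ Finset.Ico K (K+k), J j ≤ Real.exp (-(∑ j ∈ Finset.Ico K (K+k), f j)) := by
      calc ∏ j ∈ Finset.Ico K (K+k), J j ≤ ∏ j ∈ Finset.Ico K (K+k), Real.exp (-(f j)) := by
            apply Finset.prod_le_prod
            · intro j _; exact le_of_lt (hJpos j)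
            · intro j _
              have h1 := Jx_le m (Nat.nth Nat.Prime j) hm
              have h2 : 1 - f j ≤ Real.exp (-(f j)) := by
                have := Real.add_one_le_exp (-(f j))
                linarith
              exact le_trans h1 h2
      _ = Real.exp (∑ j ∈ Finset.Ico K (K+k), -(f j)) := (Real.exp_sum _ _).symm
      _ = Real.exp (-(∑ j ∈ Finset.Ico K (K+k), f j)) := by rw [Finset.sum_neg_distrib]
    have hx' := hge k
    rw [hSeq k] at hx'
    have hexp : Real.exp (-(∑ j ∈ Finset.Ico K (K+k), f j)) ≤ Real.exp (Real.log x - 1) := by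
      apply Real.exp_le_exp.mpr
      linarith
    have : Real.exp (Real.log x - 1) < x := by
      rw [Real.exp_sub, Real.exp_log hx0]
      have h1 : 1 < Real.exp 1 := by
        have := Real.exp_one_gt_d9
        linarith
      rw [div_lt_iff₀ (by positivity)]
      nlinarith
    linarith
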